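/- Let Q(x) = a·∏_{i=1}^{M} (x − r_i) with a ≠ 0 and r_1, …, r_M ∈ ℝ, let R ≥ 0, g : ℕ, and x₀ ∈ [0,1). Assume at least g of the roots (with multiplicity) satisfy |r_i| ≤ R, and that no root lies in the interval [x₀, 1]. Then for every x ∈ [x₀, 1]: |Q(x)| ≤ |Q(1)| · exp( −(Q'(1)/Q(1))·(1 − x) − (g/(2·(1 + R)²))·(1 − x)² ), where Q' is the derivative of Q. Equivalently, log|Q(x)| − log|Q(1)| ≤ −(Q'(1)/Q(1))·(1 − x) − (g/(2·(1 + R)²))·(1 − x)². -/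

import Mathlib

lemma log_one_sub_le (t : ℝ) (h0 : 0 ≤ t) (h1 : t < 1) :
    Real.log (1 - t) ≤ -t - t ^ 2 / 2 := by
  set f : ℝ → ℝ := fun u => -u - u ^ 2 / 2 - Real.log (1 - u) with hf
  have hmono : MonotoneOn f (Set.Icc 0 t) := by
    apply monotoneOn_of_hasDerivWithinAt_nonneg (f' := fun u => u ^ 2 / (1 - u))
      (convex_Icc 0 t)
    · apply ContinuousOn.sub
      · fun_prop
      · apply ContinuousOn.log (by fun_prop)
        intro u hu
        have := hu.2
        nlinarith [hu.1]
    · intro u hu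
      rw [interior_Icc] at hu
      have hune : (1 : ℝ) - u ≠ 0 := by nlinarith [hu.2]
      have h1 : HasDerivAt (fun u : ℝ => Real.log (1 - u)) (-(1 - u)⁻¹) u := by
        have := (Real.hasDerivAt_log hune).comp u
          ((hasDerivAt_id u).const_sub 1)
        simpa [Function.comp_def] using this
      have h2 : HasDerivAt f (-1 - u + (1 - u)⁻¹) u := by
        have : HasDerivAt f (-1 - 2 * u ^ 1 / 2 - -(1 - u)⁻¹) u := by
          exact (((hasDerivAt_id u).neg).sub
            (((hasDerivAt_pow 2 u).div_const 2))).sub h1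
        convert this using 1
        ring
      have heq : -1 - u + (1 - u)⁻¹ = u ^ 2 / (1 - u) := by
        field_simp
        ring
      rw [← heq]
      exact (h2).hasDerivWithinAt
    · intro u hu
      rw [interior_Icc] at hu
      have : (0:ℝ) < 1 - u := by nlinarith [hu.2]
      positivity
  have := hmono (Set.left_mem_Icc.2 h0) (Set.right_mem_Icc.2 h0) h0
  simp only [hf] at this
  simp only [sub_zero, Real.log_one] at this
  nlinarith [this]

lemma log_one_add_le (s : ℝ) (h0 : 0 ≤ s) :
    Real.log (1 + s) ≤ s - s ^ 2 / (2 * (1 + s) ^ 2) := by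
  set f : ℝ → ℝ := fun u => u - u ^ 2 / (2 * (1 + u) ^ 2) - Real.log (1 + u) with hf
  have hmono : MonotoneOn f (Set.Icc 0 s) := by
    apply monotoneOn_of_hasDerivWithinAt_nonneg
      (f' := fun u => u ^ 2 * (2 + u) / (1 + u) ^ 3) (convex_Icc 0 s)
    · apply ContinuousOn.sub
      · apply ContinuousOn.sub continuousOn_id
        apply ContinuousOn.div (by fun_prop) (by fun_prop)
        intro u hu
        have := hu.1
        positivity
      · apply ContinuousOn.log (by fun_prop)
        intro u hu
        have := hu.1
        positivity
    · intro u hu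
      rw [interior_Icc] at hu
      have hupos : (0:ℝ) < 1 + u := by nlinarith [hu.1]
      have hune : (1:ℝ) + u ≠ 0 := ne_of_gt hupos
      have h1 : HasDerivAt (fun u : ℝ => Real.log (1 + u)) ((1 + u)⁻¹) u := by
        have := (Real.hasDerivAt_log hune).comp u
          ((hasDerivAt_id u).const_add 1)
        simpa [Function.comp_def] using this
      have hd : HasDerivAt (fun u : ℝ => u ^ 2 / (2 * (1 + u) ^ 2))
          ((2 * u * (2 * (1 + u) ^ 2) - u ^ 2 * (2 * (2 * (1 + u) ^ 1 * 1)))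
            / (2 * (1 + u) ^ 2) ^ 2) u := by
        apply HasDerivAt.div
        · simpa using hasDerivAt_pow 2 u
        · exact ((((hasDerivAt_id u).const_add 1).pow 2).const_mul 2)
        · positivity
      have h2 : HasDerivAt f (1 - ((2 * u * (2 * (1 + u) ^ 2) - u ^ 2 * (2 * (2 * (1 + u) ^ 1 * 1)))
            / (2 * (1 + u) ^ 2) ^ 2) - (1 + u)⁻¹) u :=
        ((hasDerivAt_id u).sub hd).sub h1
      have heq : 1 - ((2 * u * (2 * (1 + u) ^ 2) - u ^ 2 * (2 * (2 * (1 + u) ^ 1 * 1)))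
            / (2 * (1 + u) ^ 2) ^ 2) - (1 + u)⁻¹ = u ^ 2 * (2 + u) / (1 + u) ^ 3 := by
        field_simp
        ring
      rw [← heq]
      exact h2.hasDerivWithinAt
    · intro u hu
      rw [interior_Icc] at hu
      have h1 : (0:ℝ) < 1 + u := by nlinarith [hu.1]
      have h2 : (0:ℝ) ≤ 2 + u := by nlinarith [hu.1]
      positivity
  have := hmono (Set.left_mem_Icc.2 h0) (Set.right_mem_Icc.2 h0) h0
  simp only [hf] at this
  simp only [add_zero, Real.log_one] at this
  nlinarith [this]

lemma key_root (R x r : ℝ) (hR : 0 ≤ R) (hx0 : 0 ≤ x) (hx1 : x ≤ 1)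
    (hr : r < x ∨ 1 < r) :
    Real.log |x - r| ≤ Real.log |1 - r| - (1 - x) / (1 - r) -
      (if |r| ≤ R then (1 - x) ^ 2 / (2 * (1 + R) ^ 2) else 0) := by
  rcases hr with hr | hr
  · have h1r : 0 < 1 - r := by linarith
    have hxr : 0 < x - r := by linarith
    set t := (1 - x) / (1 - r) with ht
    have ht0 : 0 ≤ t := div_nonneg (by linarith) h1r.le
    have ht1 : t < 1 := (div_lt_one h1r).2 (by linarith)
    have hmul : (1 - r) * t = 1 - x := by
      rw [ht, mul_div_cancel₀ _ (ne_of_gt h1r)]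
    have hsplit : x - r = (1 - r) * (1 - t) := by
      rw [mul_sub, mul_one, hmul]; ring
    have hlog : Real.log |x - r| = Real.log (1 - r) + Real.log (1 - t) := by
      rw [abs_of_pos hxr, hsplit, Real.log_mul (ne_of_gt h1r) (by nlinarith)]
    have hbound := log_one_sub_le t ht0 ht1
    have hteq : t ^ 2 / 2 = (1 - x) ^ 2 / (2 * (1 - r) ^ 2) := by
      have h1 : (1 - x) ^ 2 = (1 - r) ^ 2 * t ^ 2 := by rw [← hmul]; ring
      rw [h1]
      field_simp
    have hc : (if |r| ≤ R then (1 - x) ^ 2 / (2 * (1 + R) ^ 2) else 0) ≤ t ^ 2 / 2 := by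
      split_ifs with h
      · rw [hteq]
        have habs := (abs_le.1 h).1
        apply div_le_div_of_nonneg_left (by positivity) (by positivity)
        nlinarith
      · positivity
    rw [hlog, abs_of_pos h1r]
    linarith
  · have hr1 : 0 < r - 1 := by linarith
    have hrx : 0 < r - x := by linarith
    set s := (1 - x) / (r - 1) with hs
    have hs0 : 0 ≤ s := div_nonneg (by linarith) hr1.le
    have hs1 : (0:ℝ) < 1 + s := by linarith
    have hmul : (r - 1) * s = 1 - x := by
      rw [hs, mul_div_cancel₀ _ (ne_of_gt hr1)]
    have hsplit : r - x = (r - 1) * (1 + s) := by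
      rw [mul_add, mul_one, hmul]; ring
    have hlog : Real.log |x - r| = Real.log (r - 1) + Real.log (1 + s) := by
      rw [abs_sub_comm, abs_of_pos hrx, hsplit,
        Real.log_mul (ne_of_gt hr1) (ne_of_gt hs1)]
    have hbound := log_one_add_le s hs0
    have hseq : s ^ 2 / (2 * (1 + s) ^ 2) = (1 - x) ^ 2 / (2 * (r - x) ^ 2) := by
      have h1 : (1 - x) ^ 2 = (r - 1) ^ 2 * s ^ 2 := by rw [← hmul]; ring
      have h2 : (r - x) ^ 2 = (r - 1) ^ 2 * (1 + s) ^ 2 := by rw [hsplit]; ring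
      rw [h1, h2]
      rw [show (2:ℝ) * ((r - 1) ^ 2 * (1 + s) ^ 2) = (r - 1) ^ 2 * (2 * (1 + s) ^ 2) by ring,
        mul_div_mul_left _ _ (by positivity : ((r:ℝ) - 1) ^ 2 ≠ 0)]
    have hc : (if |r| ≤ R then (1 - x) ^ 2 / (2 * (1 + R) ^ 2) else 0)
        ≤ s ^ 2 / (2 * (1 + s) ^ 2) := by
      split_ifs with h
      · rw [hseq]
        have habs := (abs_le.1 h).2
        apply div_le_div_of_nonneg_left (by positivity) (by positivity)
        nlinarith
      · positivity
    have habs1 : |1 - r| = r - 1 := by rw [abs_sub_comm, abs_of_pos hr1]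
    have hmid : (1 - x) / (1 - r) = -s := by
      rw [hs, show (1:ℝ) - r = -(r - 1) by ring, div_neg]
    rw [hlog, habs1, hmid]
    linarith

theorem real_rooted_poly_decay (M : ℕ) (a : ℝ) (ha : a ≠ 0) (r : Fin M → ℝ)
    (R : ℝ) (hR : 0 ≤ R) (g : ℕ) (x₀ : ℝ) (hx₀ : x₀ ∈ Set.Ico (0 : ℝ) 1)
    (Q : ℝ → ℝ) (hQ : ∀ x, Q x = a * ∏ i, (x - r i))
    (hroots : g ≤ (Finset.univ.filter fun i => |r i| ≤ R).card)
    (hnoroots : ∀ i, r i ∉ Set.Icc x₀ 1)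
    (x : ℝ) (hx : x ∈ Set.Icc x₀ 1) :
    |Q x| ≤ |Q 1| * Real.exp (-(deriv Q 1 / Q 1) * (1 - x)
      - ((g : ℝ) / (2 * (1 + R) ^ 2)) * (1 - x) ^ 2) := by
  obtain ⟨hx₀0, hx₀1⟩ := hx₀
  obtain ⟨hxl, hxu⟩ := hx
  have hx0 : 0 ≤ x := le_trans hx₀0 hxl
  have hri : ∀ i, r i < x₀ ∨ 1 < r i := by
    intro i
    have h := hnoroots i
    simp only [Set.mem_Icc, not_and, not_le] at h
    rcases lt_or_ge (r i) x₀ with h' | h'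
    · exact Or.inl h'
    · exact Or.inr (h h')
  have hrx : ∀ i, r i < x ∨ 1 < r i :=
    fun i => (hri i).imp (fun h => lt_of_lt_of_le h hxl) id
  have h1ne : ∀ i, (1:ℝ) - r i ≠ 0 := by
    intro i
    rcases hrx i with h | h
    · exact sub_ne_zero.2 (by linarith)
    · exact sub_ne_zero.2 (by linarith)
  have hxne : ∀ i, x - r i ≠ 0 := by
    intro i
    rcases hrx i with h | h
    · exact sub_ne_zero.2 (ne_of_gt h)
    · exact sub_ne_zero.2 (by linarith)
  have hQf : Q = fun y => a * ∏ i, (y - r i) := funext hQ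
  -- derivative
  have hDP : HasDerivAt (fun y : ℝ => ∏ i, (y - r i))
      (∑ i, ∏ j ∈ Finset.univ.erase i, (1 - r j)) 1 := by
    have := HasDerivAt.fun_finsetProd (u := Finset.univ) (x := (1:ℝ))
      (f := fun i y => y - r i) (f' := fun _ => (1:ℝ))
      (fun i _ => (hasDerivAt_id (1:ℝ)).sub_const (r i))
    simpa using this
  have hD : HasDerivAt Q (a * ∑ i, ∏ j ∈ Finset.univ.erase i, (1 - r j)) 1 := by
    rw [hQf]
    exact hDP.const_mul a
  have hQ1 : Q 1 = a * ∏ i, (1 - r i) := hQ 1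
  have hP1ne : (∏ i, ((1:ℝ) - r i)) ≠ 0 :=
    Finset.prod_ne_zero_iff.2 fun i _ => h1ne i
  have hQ1ne : Q 1 ≠ 0 := by rw [hQ1]; exact mul_ne_zero ha hP1ne
  have hQxne : Q x ≠ 0 := by
    rw [hQ x]; exact mul_ne_zero ha (Finset.prod_ne_zero_iff.2 fun i _ => hxne i)
  have hratio : deriv Q 1 / Q 1 = ∑ i, (1 - r i)⁻¹ := by
    rw [hD.deriv, hQ1, mul_div_mul_left _ _ ha, Finset.sum_div]
    refine Finset.sum_congr rfl fun i _ => ?_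
    rw [← Finset.mul_prod_erase Finset.univ _ (Finset.mem_univ i), mul_comm (1 - r i),
      ← div_div, div_self (Finset.prod_ne_zero_iff.2 fun j _ => h1ne j), one_div]
  -- logs
  have hlogQx : Real.log |Q x| = Real.log |a| + ∑ i, Real.log |x - r i| := by
    rw [hQ x, abs_mul, Finset.abs_prod,
      Real.log_mul (abs_ne_zero.2 ha)
        (Finset.prod_ne_zero_iff.2 fun i _ => abs_ne_zero.2 (hxne i)),
      Real.log_prod fun i _ => abs_ne_zero.2 (hxne i)]
  have hlogQ1 : Real.log |Q 1| = Real.log |a| + ∑ i, Real.log |1 - r i| := by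
    rw [hQ1, abs_mul, Finset.abs_prod,
      Real.log_mul (abs_ne_zero.2 ha)
        (Finset.prod_ne_zero_iff.2 fun i _ => abs_ne_zero.2 (h1ne i)),
      Real.log_prod fun i _ => abs_ne_zero.2 (h1ne i)]
  have hsum : ∑ i, Real.log |x - r i| ≤
      ∑ i, (Real.log |1 - r i| - (1 - x) / (1 - r i) -
        (if |r i| ≤ R then (1 - x) ^ 2 / (2 * (1 + R) ^ 2) else 0)) :=
    Finset.sum_le_sum fun i _ => key_root R x (r i) hR hx0 hxu (hrx i)
  have hcount : (∑ i, if |r i| ≤ R then (1 - x) ^ 2 / (2 * (1 + R) ^ 2) else 0)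
      = ((Finset.univ.filter fun i => |r i| ≤ R).card : ℝ)
        * ((1 - x) ^ 2 / (2 * (1 + R) ^ 2)) := by
    rw [← Finset.sum_filter, Finset.sum_const, nsmul_eq_mul]
  have hcard : (g : ℝ) * ((1 - x) ^ 2 / (2 * (1 + R) ^ 2))
      ≤ ((Finset.univ.filter fun i => |r i| ≤ R).card : ℝ)
        * ((1 - x) ^ 2 / (2 * (1 + R) ^ 2)) := by
    apply mul_le_mul_of_nonneg_right (by exact_mod_cast hroots) (by positivity)
  -- combine
  have hmain : Real.log |Q x| ≤ Real.log |Q 1| + (-(deriv Q 1 / Q 1) * (1 - x)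
      - ((g : ℝ) / (2 * (1 + R) ^ 2)) * (1 - x) ^ 2) := by
    rw [hlogQx, hlogQ1, hratio]
    have hsplit : ∑ i, (Real.log |1 - r i| - (1 - x) / (1 - r i) -
        (if |r i| ≤ R then (1 - x) ^ 2 / (2 * (1 + R) ^ 2) else 0))
        = (∑ i, Real.log |1 - r i|) - (1 - x) * (∑ i, (1 - r i)⁻¹)
          - ((Finset.univ.filter fun i => |r i| ≤ R).card : ℝ)
            * ((1 - x) ^ 2 / (2 * (1 + R) ^ 2)) := by
      rw [Finset.sum_sub_distrib, Finset.sum_sub_distrib, hcount, Finset.mul_sum]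
      simp [div_eq_mul_inv]
    rw [hsplit] at hsum
    have hgoal : (g : ℝ) / (2 * (1 + R) ^ 2) * (1 - x) ^ 2
        = (g : ℝ) * ((1 - x) ^ 2 / (2 * (1 + R) ^ 2)) := by ring
    nlinarith [hsum, hcard]
  calc |Q x| = Real.exp (Real.log |Q x|) :=
        (Real.exp_log (abs_pos.2 hQxne)).symm
    _ ≤ Real.exp (Real.log |Q 1| + (-(deriv Q 1 / Q 1) * (1 - x)
        - ((g : ℝ) / (2 * (1 + R) ^ 2)) * (1 - x) ^ 2)) := Real.exp_le_exp.2 hmain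
    _ = |Q 1| * Real.exp (-(deriv Q 1 / Q 1) * (1 - x)
        - ((g : ℝ) / (2 * (1 + R) ^ 2)) * (1 - x) ^ 2) := by
      rw [Real.exp_add, Real.exp_log (abs_pos.2 hQ1ne)]
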